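/- For n ≥ 3, the monoid DPS_n is generated by the five partial isometries α₁, α₂, β₁, β₂, γ, where α₁ is the total map fixing 0, sending i to i+1 for 1 ≤ i ≤ n−2 and n−1 to 1; α₂ is the total map fixing 0 and every i with 3 ≤ i ≤ n−1 and swapping 1 and 2; β₁ is the partial identity on {0,1,...,n−2}; β₂ is the partial identity on {1,...,n−1}; and γ is the partial map with domain {0,1} sending 0 to 1 and 1 to 0. That is, the submonoid of DPS_n generated by {α₁, α₂, β₁, β₂, γ} equals DPS_n. -/

import Mathlib

namespace DPSPaper

instance instMonoidPFun {V : Type*} : Monoid (V →. V) where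
  mul f g := g.comp f
  one := PFun.id V
  mul_assoc a b c := (PFun.comp_assoc c b a).symm
  one_mul := PFun.comp_id
  mul_one := PFun.id_comp

/-- The geodesic distance in the star graph `S_n` on vertices `{0,1,...,n-1}`. -/
def starDist (n : ℕ) (x y : Fin n) : ℕ :=
  if x = y then 0 else if (x : ℕ) = 0 ∨ (y : ℕ) = 0 then 1 else 2

/-- Injectivity of a partial map. -/
def PInj {n : ℕ} (α : Fin n →. Fin n) : Prop :=
  ∀ ⦃x y a : Fin n⦄, a ∈ α x → a ∈ α y → x = y

/-- `α` is a partial isometry of the star graph `S_n`. -/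
def IsStarPI {n : ℕ} (α : Fin n →. Fin n) : Prop :=
  PInj α ∧ ∀ ⦃x y u v : Fin n⦄, u ∈ α x → v ∈ α y → starDist n u v = starDist n x y

/-- The set of all partial isometries of `S_n`. -/
def DPSset (n : ℕ) : Set (Fin n →. Fin n) := { α | IsStarPI α }

/-- `α₁` : fixes 0, sends `i ↦ i+1` for `1 ≤ i ≤ n-2`, and `n-1 ↦ 1`. -/
def alphaOne (n : ℕ) (hn : 3 ≤ n) : Fin n →. Fin n :=
  fun x => Part.some <|
    if (x : ℕ) = 0 then x
    else if h : (x : ℕ) = n - 1 then ⟨1, by omega⟩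
    else ⟨(x : ℕ) + 1, by have := x.isLt; omega⟩

/-- `α₂` : fixes 0 and every `i ≥ 3`, swaps 1 and 2. -/
def alphaTwo (n : ℕ) (hn : 3 ≤ n) : Fin n →. Fin n :=
  fun x => Part.some <|
    if (x : ℕ) = 1 then ⟨2, by omega⟩
    else if (x : ℕ) = 2 then ⟨1, by omega⟩
    else x

/-- `β₁` : the partial identity on `{0,1,...,n-2}`. -/
def betaOne (n : ℕ) : Fin n →. Fin n :=
  fun x => if (x : ℕ) ≤ n - 2 then Part.some x else Part.none

/-- `β₂` : the partial identity on `{1,...,n-1}`. -/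
def betaTwo (n : ℕ) : Fin n →. Fin n :=
  fun x => if (x : ℕ) = 0 then Part.none else Part.some x

/-- `γ` : domain `{0,1}`, sending `0 ↦ 1` and `1 ↦ 0`. -/
def gammaMap (n : ℕ) (hn : 3 ≤ n) : Fin n →. Fin n :=
  fun x =>
    if (x : ℕ) = 0 then Part.some ⟨1, by omega⟩
    else if (x : ℕ) = 1 then Part.some ⟨0, by omega⟩
    else Part.none

-- infrastructure
lemma mem_mul {n : ℕ} {f g : Fin n →. Fin n} {x a : Fin n} :
    a ∈ (f * g) x ↔ ∃ b, b ∈ f x ∧ a ∈ g b := by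
  show a ∈ (g.comp f) x ↔ _
  rw [PFun.comp_apply]; exact Part.mem_bind_iff

lemma mem_one {n : ℕ} {x a : Fin n} : a ∈ (1 : Fin n →. Fin n) x ↔ a = x := by
  show a ∈ PFun.id _ x ↔ _
  simp [PFun.id]

/-- total pfun associated to a permutation. -/
def embed {n : ℕ} (σ : Equiv.Perm (Fin n)) : Fin n →. Fin n := fun x => Part.some (σ x)

lemma mem_embed {n : ℕ} {σ : Equiv.Perm (Fin n)} {x a : Fin n} :
    a ∈ embed σ x ↔ a = σ x := Part.mem_some_iff

lemma embed_mul {n : ℕ} (σ τ : Equiv.Perm (Fin n)) :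
    embed (σ * τ) = embed τ * embed σ := by
  apply PFun.ext; intro x a
  simp [mem_mul, mem_embed]

lemma embed_one {n : ℕ} : embed (1 : Equiv.Perm (Fin n)) = 1 := by
  apply PFun.ext; intro x a
  simp [mem_embed, mem_one]

/-- partial identity on a finset. -/
def pid {n : ℕ} (s : Finset (Fin n)) : Fin n →. Fin n :=
  fun x => if x ∈ s then Part.some x else Part.none

lemma mem_pid {n : ℕ} {s : Finset (Fin n)} {x a : Fin n} :
    a ∈ pid s x ↔ x ∈ s ∧ a = x := by
  unfold pid
  split <;> simp_all

lemma pid_univ {n : ℕ} : pid (Finset.univ : Finset (Fin n)) = 1 := by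
  apply PFun.ext; intro x a
  simp [mem_pid, mem_one]

lemma pid_mul_pid {n : ℕ} (s t : Finset (Fin n)) : pid s * pid t = pid (s ∩ t) := by
  apply PFun.ext; intro x a
  simp only [mem_mul, mem_pid, Finset.mem_inter]
  constructor
  · rintro ⟨b, ⟨hs, hb⟩, ht, ha⟩; subst hb; exact ⟨⟨hs, ht⟩, ha⟩
  · rintro ⟨⟨hs, ht⟩, ha⟩; exact ⟨x, ⟨hs, rfl⟩, ht, ha⟩

lemma conj_pid {n : ℕ} (σ : Equiv.Perm (Fin n)) (i L : Fin n) (hσ : σ i = L) :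
    embed σ * pid ({L}ᶜ) * embed σ⁻¹ = pid ({i}ᶜ) := by
  apply PFun.ext; intro x a
  simp only [mem_mul, mem_embed, mem_pid, Finset.mem_compl, Finset.mem_singleton]
  constructor
  · rintro ⟨b, ⟨c, hc1, hc2, hb⟩, ha⟩
    subst hc1; subst hb; subst ha
    refine ⟨fun h => hc2 ?_, by simp⟩
    rw [h, hσ]
  · rintro ⟨hx, ha⟩
    subst ha
    exact ⟨σ a, ⟨σ a, rfl, fun h => hx (σ.injective (h.trans hσ.symm)), rfl⟩, by simp⟩


section Lift
variable {m : ℕ}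

/-- Equivalence between `Fin (m+2)` and the nonzero elements of `Fin (m+3)`. -/
def leafEquiv (m : ℕ) : Fin (m + 2) ≃ {x : Fin (m + 3) // x ≠ 0} where
  toFun i := ⟨i.succ, Fin.succ_ne_zero i⟩
  invFun x := x.1.pred x.2
  left_inv i := Fin.pred_succ i
  right_inv x := Subtype.ext (Fin.succ_pred x.1 x.2)

/-- Lift a permutation of leaves to a permutation of `Fin (m+3)` fixing `0`. -/
def liftPerm (m : ℕ) : Equiv.Perm (Fin (m + 2)) →* Equiv.Perm (Fin (m + 3)) :=
  Equiv.Perm.extendDomainHom (leafEquiv m)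

lemma liftPerm_zero (π : Equiv.Perm (Fin (m + 2))) : liftPerm m π 0 = 0 :=
  Equiv.Perm.extendDomain_apply_not_subtype π (leafEquiv m) (by simp)

lemma liftPerm_succ (π : Equiv.Perm (Fin (m + 2))) (i : Fin (m + 2)) :
    liftPerm m π i.succ = (π i).succ := by
  have := Equiv.Perm.extendDomain_apply_image π (leafEquiv m) i
  simpa [leafEquiv, liftPerm, Equiv.Perm.extendDomainHom_apply] using this

lemma liftPerm_surj (σ : Equiv.Perm (Fin (m + 3))) (h0 : σ 0 = 0) :
    ∃ π : Equiv.Perm (Fin (m + 2)), liftPerm m π = σ := by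
  have hz : ∀ x : Fin (m + 3), σ x = 0 ↔ x = 0 := by
    intro x
    constructor
    · intro h; exact σ.injective (h.trans h0.symm)
    · rintro rfl; exact h0
  have hiff : ∀ x : Fin (m + 3), x ≠ 0 ↔ σ x ≠ 0 := fun x => (not_congr (hz x)).symm
  refine ⟨(leafEquiv m).permCongr.symm (σ.subtypePerm (fun x => (hiff x).symm)), ?_⟩
  set π := (leafEquiv m).permCongr.symm (σ.subtypePerm (fun x => (hiff x).symm)) with hπ
  ext x
  rcases eq_or_ne x 0 with rfl | hx
  · rw [liftPerm_zero, h0]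
  · have e1 : (leafEquiv m) (x.pred hx) = ⟨x, hx⟩ := Subtype.ext (Fin.succ_pred x hx)
    have h2 : liftPerm m π x = (π (x.pred hx)).succ := by
      conv_lhs => rw [← Fin.succ_pred x hx]
      exact liftPerm_succ π (x.pred hx)
    rw [h2, hπ, Equiv.permCongr_symm, Equiv.permCongr_apply, Equiv.symm_symm, e1]
    rw [Equiv.Perm.subtypePerm_apply]
    simp [leafEquiv]
end Lift


section Generators
variable {m : ℕ} (hn : 3 ≤ m + 3)

lemma alphaOne_eq : alphaOne (m + 3) hn = embed (liftPerm m (finRotate (m + 2))) := by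
  funext x
  show Part.some _ = Part.some _
  congr 1
  induction x using Fin.cases with
  | zero => rw [liftPerm_zero]; simp
  | succ i =>
      rw [liftPerm_succ, finRotate_succ_apply]
      have hi2 := i.isLt
      have hadd : ((i + 1 : Fin (m + 2)) : ℕ) = if (i : ℕ) = m + 1 then 0 else (i : ℕ) + 1 := by
        rw [Fin.val_add_one]
        by_cases h : i = Fin.last (m + 1)
        · rw [if_pos h, if_pos (by rw [h]; rfl)]
        · rw [if_neg h, if_neg (fun hc => h (Fin.ext (by rw [hc]; rfl)))]
      have hs0 : ¬ ((i.succ : ℕ) = 0) := by simp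
      apply Fin.ext
      rw [Fin.val_succ (i + 1), hadd]
      rw [if_neg hs0]
      by_cases hlast : (i : ℕ) = m + 1
      · rw [dif_pos (show (i.succ : ℕ) = m + 3 - 1 by rw [Fin.val_succ]; omega)]
        rw [if_pos hlast]
      · rw [dif_neg (show ¬ (i.succ : ℕ) = m + 3 - 1 by rw [Fin.val_succ]; omega)]
        rw [if_neg hlast]
        rfl

lemma alphaTwo_eq : alphaTwo (m + 3) hn = embed (liftPerm m (Equiv.swap 0 1)) := by
  funext x
  show Part.some _ = Part.some _
  congr 1
  induction x using Fin.cases with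
  | zero => rw [liftPerm_zero]; simp
  | succ i =>
      rw [liftPerm_succ, Equiv.swap_apply_def]
      apply Fin.ext
      simp only [Fin.val_succ]
      have h01 : ((0 : Fin (m+2)) : ℕ) = 0 := rfl
      have h11 : ((1 : Fin (m+2)) : ℕ) = 1 := rfl
      have hi0 : i = 0 ↔ (i : ℕ) = 0 := by rw [Fin.ext_iff, h01]
      have hi1 : i = 1 ↔ (i : ℕ) = 1 := by rw [Fin.ext_iff, h11]
      split_ifs <;> simp_all [Fin.val_succ] <;> omega

lemma betaOne_eq : betaOne (m + 3) = pid ({Fin.last (m + 2)}ᶜ) := by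
  apply PFun.ext; intro x a
  rw [mem_pid]
  unfold betaOne
  have hx := x.isLt
  have hlast : x ∈ ({Fin.last (m + 2)}ᶜ : Finset (Fin (m+3))) ↔ (x : ℕ) ≠ m + 2 := by
    simp [Fin.ext_iff]
  split_ifs with h <;> simp_all <;> omega

lemma betaTwo_eq : betaTwo (m + 3) = pid ({(0 : Fin (m+3))}ᶜ) := by
  apply PFun.ext; intro x a
  rw [mem_pid]
  unfold betaTwo
  have h0 : x ∈ ({(0 : Fin (m+3))}ᶜ : Finset (Fin (m+3))) ↔ (x : ℕ) ≠ 0 := by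
    simp [Fin.ext_iff, -Fin.val_eq_zero_iff]
  split_ifs with h <;> simp_all

lemma mem_gamma {x a : Fin (m + 3)} :
    a ∈ gammaMap (m + 3) hn x ↔ ((x : ℕ) = 0 ∧ (a : ℕ) = 1) ∨ ((x : ℕ) = 1 ∧ (a : ℕ) = 0) := by
  unfold gammaMap
  split_ifs with h1 h2 <;> simp_all [Part.mem_some_iff, Fin.ext_iff, -Fin.val_eq_zero_iff]

end Generators


section Forward
variable {n : ℕ}

lemma one_isStarPI : IsStarPI (1 : Fin n →. Fin n) := by
  constructor
  · intro x y a hx hy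
    rw [mem_one] at hx hy
    rw [← hx, ← hy]
  · intro x y u v hu hv
    rw [mem_one] at hu hv
    rw [hu, hv]

lemma mul_isStarPI {f g : Fin n →. Fin n} (hf : IsStarPI f) (hg : IsStarPI g) :
    IsStarPI (f * g) := by
  obtain ⟨hf1, hf2⟩ := hf
  obtain ⟨hg1, hg2⟩ := hg
  constructor
  · intro x y a hx hy
    rw [mem_mul] at hx hy
    obtain ⟨b, hb, hab⟩ := hx
    obtain ⟨c, hc, hac⟩ := hy
    exact hf1 hb (hg1 hab hac ▸ hc)
  · intro x y u v hu hv
    rw [mem_mul] at hu hv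
    obtain ⟨b, hb, hub⟩ := hu
    obtain ⟨c, hc, hvc⟩ := hv
    rw [hg2 hub hvc, hf2 hb hc]

/-- The monoid of all partial isometries. -/
def DPSmonoid (n : ℕ) : Submonoid (Fin n →. Fin n) where
  carrier := DPSset n
  one_mem' := one_isStarPI
  mul_mem' := mul_isStarPI

lemma pid_isStarPI (s : Finset (Fin n)) : IsStarPI (pid s) := by
  constructor
  · intro x y a hx hy
    rw [mem_pid] at hx hy
    rw [← hx.2, ← hy.2]
  · intro x y u v hu hv
    rw [mem_pid] at hu hv
    rw [hu.2, hv.2]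

lemma embed_isStarPI {σ : Equiv.Perm (Fin n)} (h0 : ∀ x : Fin n, (σ x : ℕ) = 0 ↔ (x : ℕ) = 0) :
    IsStarPI (embed σ) := by
  constructor
  · intro x y a hx hy
    rw [mem_embed] at hx hy
    exact σ.injective (hx ▸ hy)
  · intro x y u v hu hv
    rw [mem_embed] at hu hv
    subst hu; subst hv
    unfold starDist
    simp only [EmbeddingLike.apply_eq_iff_eq, h0]

end Forward


section Forward2
variable {m : ℕ}

lemma fin_val_zero_iff {k : ℕ} (x : Fin (k + 1)) : (x : ℕ) = 0 ↔ x = 0 := by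
  simp [Fin.ext_iff, -Fin.val_eq_zero_iff]

lemma liftPerm_val0 (π : Equiv.Perm (Fin (m + 2))) :
    ∀ x : Fin (m + 3), ((liftPerm m π x : Fin (m + 3)) : ℕ) = 0 ↔ (x : ℕ) = 0 := by
  intro x
  rw [fin_val_zero_iff, fin_val_zero_iff]
  constructor
  · intro h
    have := liftPerm_zero (m := m) π
    exact (liftPerm m π).injective (h.trans this.symm)
  · rintro rfl; exact liftPerm_zero π

lemma gamma_isStarPI (hn : 3 ≤ m + 3) : IsStarPI (gammaMap (m + 3) hn) := by
  constructor
  · intro x y a hx hy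
    rw [mem_gamma] at hx hy
    apply Fin.ext
    rcases hx with ⟨h1, h2⟩ | ⟨h1, h2⟩ <;> rcases hy with ⟨h3, h4⟩ | ⟨h3, h4⟩ <;> omega
  · intro x y u v hu hv
    rw [mem_gamma] at hu hv
    unfold starDist
    have exy : (x = y) ↔ (x : ℕ) = (y : ℕ) := Fin.ext_iff
    have euv : (u = v) ↔ (u : ℕ) = (v : ℕ) := Fin.ext_iff
    rcases hu with ⟨h1, h2⟩ | ⟨h1, h2⟩ <;> rcases hv with ⟨h3, h4⟩ | ⟨h3, h4⟩ <;>
      split_ifs <;> simp_all <;> omega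

lemma closure_subset_DPS (hn : 3 ≤ m + 3) :
    (↑(Submonoid.closure
        {alphaOne (m+3) hn, alphaTwo (m+3) hn, betaOne (m+3), betaTwo (m+3), gammaMap (m+3) hn}) :
      Set (Fin (m+3) →. Fin (m+3))) ⊆ DPSset (m + 3) := by
  have h : Submonoid.closure
      {alphaOne (m+3) hn, alphaTwo (m+3) hn, betaOne (m+3), betaTwo (m+3), gammaMap (m+3) hn}
      ≤ DPSmonoid (m+3) := by
    rw [Submonoid.closure_le]
    rintro f (rfl | rfl | rfl | rfl | rfl)
    · rw [alphaOne_eq hn]; exact embed_isStarPI (liftPerm_val0 _)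
    · rw [alphaTwo_eq hn]; exact embed_isStarPI (liftPerm_val0 _)
    · rw [betaOne_eq]; exact pid_isStarPI _
    · rw [betaTwo_eq]; exact pid_isStarPI _
    · exact gamma_isStarPI hn
  exact h

end Forward2


section Membership
variable {m : ℕ}

/-- The generating set. -/
def gens (m : ℕ) (hn : 3 ≤ m + 3) : Set (Fin (m+3) →. Fin (m+3)) :=
  {alphaOne (m+3) hn, alphaTwo (m+3) hn, betaOne (m+3), betaTwo (m+3), gammaMap (m+3) hn}

lemma leafEmbed_mem (hn : 3 ≤ m + 3) (π : Equiv.Perm (Fin (m+2))) :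
    embed (liftPerm m π) ∈ Submonoid.closure (gens m hn) := by
  have hc0 : finRotate (m+2) 0 = 1 := by rw [finRotate_succ_apply, zero_add]
  have hgen : Subgroup.closure {finRotate (m+2), Equiv.swap 0 1}
      = (⊤ : Subgroup (Equiv.Perm (Fin (m+2)))) := by
    have h1 := Equiv.Perm.closure_cycle_adjacent_swap
      (σ := finRotate (m+2)) isCycle_finRotate support_finRotate 0
    rwa [hc0] at h1
  have hP : ∀ ρ ∈ Subgroup.closure {finRotate (m+2), Equiv.swap 0 1},
      embed (liftPerm m ρ) ∈ Submonoid.closure (gens m hn) := by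
    intro ρ hρ
    induction hρ using Subgroup.closure_induction with
    | mem x hx =>
        rcases hx with rfl | rfl
        · have := alphaOne_eq (m := m) hn
          rw [← this]
          exact Submonoid.subset_closure (Or.inl rfl)
        · have := alphaTwo_eq (m := m) hn
          rw [← this]
          exact Submonoid.subset_closure (Or.inr (Or.inl rfl))
    | one =>
        rw [map_one, embed_one]
        exact one_mem _
    | mul x y hx hy ihx ihy =>
        rw [map_mul, embed_mul]
        exact mul_mem ihy ihx
    | inv x hx ih =>
        have hpow : ∀ k : ℕ, embed (liftPerm m (x ^ k)) ∈ Submonoid.closure (gens m hn) := by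
          intro k
          induction k with
          | zero => rw [pow_zero, map_one, embed_one]; exact one_mem _
          | succ k ihk =>
              rw [pow_succ, map_mul, embed_mul]
              exact mul_mem ih ihk
        have ho : x ^ orderOf x = 1 := pow_orderOf_eq_one x
        have hopos : 0 < orderOf x := orderOf_pos x
        have hinv : x⁻¹ = x ^ (orderOf x - 1) := by
          apply eq_comm.mp
          apply eq_inv_of_mul_eq_one_left
          rw [← pow_succ]
          have : orderOf x - 1 + 1 = orderOf x := by omega
          rw [this, ho]
        rw [hinv]
        exact hpow _
  exact hP π (hgen ▸ Subgroup.mem_top π)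

lemma embed_mem (hn : 3 ≤ m + 3) (σ : Equiv.Perm (Fin (m+3))) (h0 : σ 0 = 0) :
    embed σ ∈ Submonoid.closure (gens m hn) := by
  obtain ⟨π, rfl⟩ := liftPerm_surj σ h0
  exact leafEmbed_mem hn π

lemma pid_compl_singleton_mem (hn : 3 ≤ m + 3) (i : Fin (m+3)) :
    pid ({i}ᶜ) ∈ Submonoid.closure (gens m hn) := by
  rcases eq_or_ne i 0 with rfl | hi
  · rw [← betaTwo_eq]
    exact Submonoid.subset_closure (Or.inr (Or.inr (Or.inr (Or.inl rfl))))
  · set σ := liftPerm m (Equiv.swap (i.pred hi) (Fin.last (m+1))) with hσ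
    have hσi : σ i = Fin.last (m+2) := by
      have h1 : σ ((i.pred hi).succ) = (Equiv.swap (i.pred hi) (Fin.last (m+1)) (i.pred hi)).succ :=
        liftPerm_succ _ _
      rw [Fin.succ_pred] at h1
      rw [h1, Equiv.swap_apply_left]
      rfl
    have hconj := conj_pid σ i (Fin.last (m+2)) hσi
    rw [← hconj]
    have h1 : embed σ ∈ Submonoid.closure (gens m hn) := by
      apply embed_mem hn
      exact liftPerm_zero _
    have h2 : embed σ⁻¹ ∈ Submonoid.closure (gens m hn) := by
      apply embed_mem hn
      rw [hσ, ← map_inv]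
      exact liftPerm_zero _
    have h3 : betaOne (m+3) ∈ Submonoid.closure (gens m hn) :=
      Submonoid.subset_closure (Or.inr (Or.inr (Or.inl rfl)))
    rw [betaOne_eq] at h3
    exact mul_mem (mul_mem h1 h3) h2

lemma pid_mem (hn : 3 ≤ m + 3) (s : Finset (Fin (m+3))) :
    pid s ∈ Submonoid.closure (gens m hn) := by
  have hcompl : ∀ t : Finset (Fin (m+3)), pid tᶜ ∈ Submonoid.closure (gens m hn) := by
    intro t
    induction t using Finset.induction_on with
    | empty =>
        have : (∅ : Finset (Fin (m+3)))ᶜ = Finset.univ := by simp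
        rw [this, pid_univ]
        exact one_mem _
    | @insert a t ha ih =>
        have : (insert a t)ᶜ = ({a}ᶜ ∩ tᶜ : Finset (Fin (m+3))) := by
          ext x; simp [or_comm]
        rw [this, ← pid_mul_pid]
        exact mul_mem (pid_compl_singleton_mem hn a) ih
  have := hcompl sᶜ
  rwa [compl_compl] at this

end Membership


section Classify
variable {m : ℕ}

open scoped Classical in
lemma exists_perm_extend (α : Fin (m+3) →. Fin (m+3)) (hinj : PInj α)
    (hnc : ∀ x u, u ∈ α x → (x = 0 ↔ u = 0)) :
    ∃ σ : Equiv.Perm (Fin (m+3)), σ 0 = 0 ∧ ∀ x (h : (α x).Dom), σ x = (α x).get h := by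
  classical
  set D : Finset (Fin (m+3)) := Finset.univ.filter (fun x => (α x).Dom) with hD
  have hmemD : ∀ x, x ∈ D ↔ (α x).Dom := by intro x; simp [hD]
  set f : Fin (m+3) → Fin (m+3) := fun x => if h : (α x).Dom then (α x).get h else x with hf
  have hfval : ∀ x (h : (α x).Dom), f x = (α x).get h := by
    intro x h; simp [hf, h]
  have hfmem : ∀ x (h : (α x).Dom), f x ∈ α x := by
    intro x h; rw [hfval x h]; exact Part.get_mem h
  have hfinj : Set.InjOn f D := by
    intro x hx y hy hxy
    rw [Finset.mem_coe, hmemD] at hx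
    rw [Finset.mem_coe, hmemD] at hy
    exact hinj (hfmem x hx) (hxy ▸ hfmem y hy)
  set R : Finset (Fin (m+3)) := D.image f with hR
  have hcardR : R.card = D.card := Finset.card_image_of_injOn hfinj
  have h0DR : (0 : Fin (m+3)) ∈ D ↔ (0 : Fin (m+3)) ∈ R := by
    constructor
    · intro h0
      have hdom := (hmemD 0).mp h0
      have : f 0 = 0 := ((hnc 0 (f 0) (hfmem 0 hdom)).mp rfl)
      rw [hR, Finset.mem_image]
      exact ⟨0, h0, this⟩
    · intro h0
      rw [hR, Finset.mem_image] at h0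
      obtain ⟨x, hx, hfx⟩ := h0
      have hdom := (hmemD x).mp hx
      have : x = 0 := (hnc x (f x) (hfmem x hdom)).mpr hfx
      rwa [← this]
  have hfne0 : ∀ x ∈ D, x ≠ 0 → f x ≠ 0 := by
    intro x hx hx0
    have hdom := (hmemD x).mp hx
    intro hc
    exact hx0 ((hnc x (f x) (hfmem x hdom)).mpr hc)
  have hcards : (D ∪ {0}).card = (R ∪ {0}).card := by
    by_cases h0 : (0 : Fin (m+3)) ∈ D
    · rw [Finset.union_eq_left.mpr (by simpa using h0),
        Finset.union_eq_left.mpr (by simpa using h0DR.mp h0), hcardR]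
    · have h0R : (0 : Fin (m+3)) ∉ R := fun hc => h0 (h0DR.mpr hc)
      rw [Finset.union_comm D, Finset.union_comm R,
        ← Finset.insert_eq, ← Finset.insert_eq,
        Finset.card_insert_of_notMem h0, Finset.card_insert_of_notMem h0R, hcardR]
  have hcardc : ((D ∪ {0})ᶜ).card = ((R ∪ {0})ᶜ).card := by
    rw [Finset.card_compl, Finset.card_compl, hcards]
  set g := Finset.equivOfCardEq hcardc with hg
  set F : Fin (m+3) → Fin (m+3) := fun x =>
    if hx0 : x = 0 then 0
    else if hx : x ∈ D then f x
    else (g ⟨x, by simp [hx0, hx]⟩ : Fin (m+3)) with hF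
  have hgmem : ∀ (x : Fin (m+3)) (hx : x ∈ (D ∪ {0})ᶜ), ((g ⟨x, hx⟩ : {y // y ∈ (R ∪ {0})ᶜ}) : Fin (m+3)) ∈ (R ∪ {0})ᶜ :=
    fun x hx => (g ⟨x, hx⟩).2
  have hgne0 : ∀ (x : Fin (m+3)) (hx : x ∈ (D ∪ {0})ᶜ), ((g ⟨x, hx⟩ : {y // y ∈ (R ∪ {0})ᶜ}) : Fin (m+3)) ≠ 0 := by
    intro x hx hc
    have := hgmem x hx
    rw [hc] at this
    simp at this
  have hgnR : ∀ (x : Fin (m+3)) (hx : x ∈ (D ∪ {0})ᶜ), ((g ⟨x, hx⟩ : {y // y ∈ (R ∪ {0})ᶜ}) : Fin (m+3)) ∉ R := by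
    intro x hx hc
    have := hgmem x hx
    simp [Finset.mem_union] at this
    exact this.2 hc
  have hfR : ∀ x ∈ D, f x ∈ R := by
    intro x hx; rw [hR, Finset.mem_image]; exact ⟨x, hx, rfl⟩
  have hF0 : F 0 = 0 := by simp [hF]
  have hFD : ∀ x ∈ D, F x = f x := by
    intro x hx
    by_cases hx0 : x = 0
    · subst hx0
      rw [hF0]
      exact ((hnc 0 (f 0) (hfmem 0 ((hmemD 0).mp hx))).mp rfl).symm
    · simp [hF, hx0, hx]
  have hFne0 : ∀ x, x ≠ 0 → F x ≠ 0 := by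
    intro x hx0
    by_cases hx : x ∈ D
    · rw [hFD x hx]; exact hfne0 x hx hx0
    · simp only [hF, dif_neg hx0, dif_neg hx]
      exact hgne0 x _
  have Finj : Function.Injective F := by
    intro a b hab
    by_cases ha0 : a = 0
    · subst ha0
      by_contra hb0
      exact hFne0 b (Ne.symm hb0) (by rw [← hab, hF0])
    · by_cases hb0 : b = 0
      · subst hb0
        exact absurd (hab.trans hF0) (hFne0 a ha0)
      · by_cases ha : a ∈ D
        · by_cases hb : b ∈ D
          · exact hfinj ha hb (by rw [← hFD a ha, ← hFD b hb, hab])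
          · exfalso
            rw [hFD a ha] at hab
            have h1 : f a ∈ R := hfR a ha
            rw [hab] at h1
            simp only [hF, dif_neg hb0, dif_neg hb] at h1
            exact hgnR b _ h1
        · by_cases hb : b ∈ D
          · exfalso
            rw [hFD b hb] at hab
            have h1 : f b ∈ R := hfR b hb
            rw [← hab] at h1
            simp only [hF, dif_neg ha0, dif_neg ha] at h1
            exact hgnR a _ h1
          · simp only [hF, dif_neg ha0, dif_neg ha, dif_neg hb0, dif_neg hb] at hab
            have := g.injective (Subtype.ext hab)
            exact congrArg Subtype.val this
  refine ⟨Equiv.ofBijective F (Finite.injective_iff_bijective.mp Finj), hF0, ?_⟩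
  intro x h
  show F x = (α x).get h
  rw [hFD x ((hmemD x).mpr h), hfval x h]

end Classify


section Reverse
variable {m : ℕ}

lemma starDist_cross {x y : Fin (m+3)} (hx : (x:ℕ) ≠ 0) (hy : (y:ℕ) = 0) :
    starDist (m+3) x y = 1 := by
  unfold starDist
  rw [if_neg (fun h => hx (by rw [h]; exact hy)), if_pos (Or.inr hy)]

lemma starDist_leaves {x y : Fin (m+3)} (hx : (x:ℕ) ≠ 0) (hy : (y:ℕ) ≠ 0) (hxy : x ≠ y) :
    starDist (m+3) x y = 2 := by
  unfold starDist
  rw [if_neg hxy, if_neg (by tauto)]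

lemma DPS_subset_closure (hn : 3 ≤ m + 3) :
    DPSset (m+3) ⊆ ↑(Submonoid.closure (gens m hn)) := by
  classical
  intro α hα
  obtain ⟨hinj, hdist⟩ := hα
  have hfun : ∀ {x u v : Fin (m+3)}, u ∈ α x → v ∈ α x → u = v := by
    intro x u v hu hv
    exact Part.mem_unique hu hv
  set D : Finset (Fin (m+3)) := Finset.univ.filter (fun x => (α x).Dom) with hD
  have hmemD : ∀ x, x ∈ D ↔ (α x).Dom := by intro x; simp [hD]
  have hgamma_mem : gammaMap (m+3) hn ∈ Submonoid.closure (gens m hn) :=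
    Submonoid.subset_closure (Or.inr (Or.inr (Or.inr (Or.inr rfl))))
  by_cases hcross : ∃ x u, u ∈ α x ∧ ¬ ((x = 0) ↔ (u = 0))
  · -- crossing case
    obtain ⟨x₀, u₀, h₀, hcr⟩ := hcross
    have h00 : (0 : Fin (m+3)) ∉ α 0 := by
      intro hu
      by_cases hx0 : x₀ = 0
      · subst hx0
        exact hcr ⟨fun _ => hfun h₀ hu, fun _ => rfl⟩
      · by_cases hu0 : u₀ = 0
        · subst hu0
          exact hx0 (hinj h₀ hu)
        · exact hcr ⟨fun h => absurd h hx0, fun h => absurd h hu0⟩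
    have hcases : (x₀ = 0 ∧ u₀ ≠ 0) ∨ (x₀ ≠ 0 ∧ u₀ = 0) := by tauto
    set j : Fin (m+3) := if h : (α 0).Dom then (α 0).get h else ⟨1, by omega⟩ with hj
    have hjval : ∀ u ∈ α (0 : Fin (m+3)), u = j := by
      intro u hu
      have hdom : (α 0).Dom := Part.dom_iff_mem.mpr ⟨u, hu⟩
      rw [hj, dif_pos hdom]
      exact (Part.get_eq_of_mem hu hdom).symm
    have hj0 : j ≠ 0 := by
      intro hc
      by_cases h : (α 0).Dom
      · have hmem : j ∈ α 0 := by rw [hj, dif_pos h]; exact Part.get_mem h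
        rw [hc] at hmem
        exact h00 hmem
      · have he : j = ⟨1, by omega⟩ := by rw [hj, dif_neg h]
        rw [he] at hc
        exact one_ne_zero (congrArg Fin.val hc)
    set i : Fin (m+3) := if h : ∃ x, (0 : Fin (m+3)) ∈ α x then h.choose else ⟨1, by omega⟩
      with hi
    have hival : ∀ x, (0 : Fin (m+3)) ∈ α x → x = i := by
      intro x hx
      have hex : ∃ y, (0 : Fin (m+3)) ∈ α y := ⟨x, hx⟩
      rw [hi, dif_pos hex]
      exact hinj hx hex.choose_spec
    have hi0 : i ≠ 0 := by
      intro hc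
      by_cases h : ∃ x, (0 : Fin (m+3)) ∈ α x
      · have hmem : (0 : Fin (m+3)) ∈ α i := by rw [hi, dif_pos h]; exact h.choose_spec
        rw [hc] at hmem
        exact h00 hmem
      · have he : i = ⟨1, by omega⟩ := by rw [hi, dif_neg h]
        rw [he] at hc
        exact one_ne_zero (congrArg Fin.val hc)
    have hval0 : ∀ z : Fin (m+3), z = 0 ↔ (z : ℕ) = 0 := fun z => (fin_val_zero_iff z).symm
    have hcl : ∀ x u, u ∈ α x → (x = 0 ∧ u = j) ∨ (x = i ∧ u = 0) := by
      intro x u hu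
      by_cases hu0 : u = 0
      · right
        exact ⟨hival x (hu0 ▸ hu), hu0⟩
      · have hx0 : x = 0 := by
          by_contra hx0
          have hd := hdist hu h₀
          rcases hcases with ⟨hxx0, huu0⟩ | ⟨hxx0, huu0⟩
          · subst hxx0
            have hne : u ≠ u₀ := fun h => hx0 (hinj hu (h ▸ h₀))
            rw [starDist_leaves (fun h => hu0 ((hval0 u).mpr h))
                (fun h => huu0 ((hval0 u₀).mpr h)) hne,
              starDist_cross (fun h => hx0 ((hval0 x).mpr h)) rfl] at hd
            omega
          · subst huu0
            have hxx : x ≠ x₀ := fun h => hu0 (hfun hu (h ▸ h₀))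
            rw [starDist_cross (fun h => hu0 ((hval0 u).mpr h)) rfl,
              starDist_leaves (fun h => hx0 ((hval0 x).mpr h))
                (fun h => hxx0 ((hval0 x₀).mpr h)) hxx] at hd
            omega
        left
        exact ⟨hx0, hjval u (hx0 ▸ hu)⟩
    set σ₁ := liftPerm m (Equiv.swap (i.pred hi0) 0) with hσ₁
    set σ₂ := liftPerm m (Equiv.swap 0 (j.pred hj0)) with hσ₂
    have hσ₁0 : σ₁ 0 = 0 := liftPerm_zero _
    have hσ₂0 : σ₂ 0 = 0 := liftPerm_zero _
    have hσ₁i : ((σ₁ i : Fin (m+3)) : ℕ) = 1 := by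
      have h1 := liftPerm_succ (Equiv.swap (i.pred hi0) 0) (i.pred hi0)
      rw [Fin.succ_pred] at h1
      rw [hσ₁, h1, Equiv.swap_apply_left]
      rfl
    have hσ₂1 : ∀ b : Fin (m+3), (b : ℕ) = 1 → σ₂ b = j := by
      intro b hb
      have hb' : b = (0 : Fin (m+2)).succ := Fin.ext (by rw [hb]; rfl)
      rw [hσ₂, hb', liftPerm_succ, Equiv.swap_apply_left, Fin.succ_pred]
    have key : α = pid D * embed σ₁ * gammaMap (m+3) hn * embed σ₂ := by
      apply PFun.ext
      intro x a
      constructor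
      · intro ha
        have hxD : x ∈ D := (hmemD x).mpr (Part.dom_iff_mem.mpr ⟨a, ha⟩)
        rcases hcl x a ha with ⟨hx, hae⟩ | ⟨hx, hae⟩
        · subst hx; subst hae
          refine mem_mul.mpr ⟨⟨1, by omega⟩, mem_mul.mpr ⟨σ₁ 0,
            mem_mul.mpr ⟨0, mem_pid.mpr ⟨hxD, rfl⟩, mem_embed.mpr rfl⟩, ?_⟩, ?_⟩
          · refine (mem_gamma hn).mpr (Or.inl ⟨?_, rfl⟩)
            rw [hσ₁0]
            rfl
          · exact mem_embed.mpr (hσ₂1 ⟨1, by omega⟩ rfl).symm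
        · subst hx; subst hae
          refine mem_mul.mpr ⟨0, mem_mul.mpr ⟨σ₁ i,
            mem_mul.mpr ⟨i, mem_pid.mpr ⟨hxD, rfl⟩, mem_embed.mpr rfl⟩, ?_⟩, ?_⟩
          · exact (mem_gamma hn).mpr (Or.inr ⟨hσ₁i, rfl⟩)
          · exact mem_embed.mpr hσ₂0.symm
      · intro h
        obtain ⟨b, hb, hab⟩ := mem_mul.mp h
        obtain ⟨c, hc, hbc⟩ := mem_mul.mp hb
        obtain ⟨d, hdd, hcd⟩ := mem_mul.mp hc
        obtain ⟨hxD, hdx⟩ := mem_pid.mp hdd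
        subst hdx
        have hcσ : c = σ₁ d := mem_embed.mp hcd
        have haσ : a = σ₂ b := mem_embed.mp hab
        have hdom : (α d).Dom := (hmemD d).mp hxD
        have hu : (α d).get hdom ∈ α d := Part.get_mem hdom
        rcases hcl d _ hu with ⟨hx, hae⟩ | ⟨hx, hae⟩
        · subst hx
          have hc0 : (c : ℕ) = 0 := by rw [hcσ, hσ₁0]; rfl
          rcases (mem_gamma hn).mp hbc with ⟨_, hb1⟩ | ⟨hc1, _⟩
          · rw [haσ, hσ₂1 b hb1, ← hae]
            exact hu
          · omega
        · subst hx
          have hc1 : (c : ℕ) = 1 := by rw [hcσ]; exact hσ₁i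
          rcases (mem_gamma hn).mp hbc with ⟨hc0, _⟩ | ⟨_, hb0⟩
          · omega
          · have hb' : b = 0 := (hval0 b).mpr hb0
            rw [haσ, hb', hσ₂0, ← hae]
            exact hu
    rw [key]
    exact mul_mem (mul_mem (mul_mem (pid_mem hn D) (embed_mem hn σ₁ hσ₁0)) hgamma_mem)
      (embed_mem hn σ₂ hσ₂0)
  · -- non-crossing case
    push_neg at hcross
    have hnc : ∀ x u, u ∈ α x → (x = 0 ↔ u = 0) := hcross
    obtain ⟨σ, hσ0, hσ⟩ := exists_perm_extend α hinj hnc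
    have key : α = pid D * embed σ := by
      apply PFun.ext
      intro x a
      constructor
      · intro ha
        have hdom : (α x).Dom := Part.dom_iff_mem.mpr ⟨a, ha⟩
        have hxD : x ∈ D := (hmemD x).mpr hdom
        refine mem_mul.mpr ⟨x, mem_pid.mpr ⟨hxD, rfl⟩, mem_embed.mpr ?_⟩
        rw [hσ x hdom]
        exact (Part.get_eq_of_mem ha hdom).symm
      · intro h
        obtain ⟨b, hb, hab⟩ := mem_mul.mp h
        obtain ⟨hxD, hbx⟩ := mem_pid.mp hb
        subst hbx
        have hdom : (α b).Dom := (hmemD b).mp hxD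
        rw [mem_embed.mp hab, hσ b hdom]
        exact Part.get_mem hdom
    rw [key]
    exact mul_mem (pid_mem hn D) (embed_mem hn σ hσ0)
end Reverse


theorem statement8 (n : ℕ) (hn : 3 ≤ n) :
    (↑(Submonoid.closure
        {alphaOne n hn, alphaTwo n hn, betaOne n, betaTwo n, gammaMap n hn}) :
      Set (Fin n →. Fin n)) = DPSset n := by
  obtain ⟨m, rfl⟩ : ∃ m, n = m + 3 := ⟨n - 3, by omega⟩
  apply Set.Subset.antisymm
  · exact closure_subset_DPS hn
  · exact DPS_subset_closure hn

end DPSPaper
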